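/- Let (U,p) be a partial metric space, α ∈ [0,1), and T : U → U satisfy condition (A): for all x ∈ U and q ∈ ℕ, p(T(x), T^{q+1}(x)) ≤ max{α·p(x,T^{q+1}(x)), …, α·p(x,T(x)), p(x,x)}. Then for every x ∈ U the limit r_x := lim_{q→∞} p(T^q(x), T^q(x)) exists. -/

import Mathlib

open Filter Topology

/-- A partial metric on `U`. -/
structure IsPartialMetric {U : Type*} (p : U → U → ℝ) : Prop where
  nonneg : ∀ x y, 0 ≤ p x y
  eq_iff : ∀ x y, x = y ↔ (p x x = p x y ∧ p y y = p x y)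
  self_le : ∀ x y, p x x ≤ p x y
  symm : ∀ x y, p x y = p y x
  triangle : ∀ x y z, p x y ≤ p x z + p z y - p z z

/-- Condition (A): for every `x` and positive integer `q`,
`p (T x) (T^[q+1] x) ≤ max {α p(x,T^{q+1}x), …, α p(x,Tx), p(x,x)}`. -/
def CondA {U : Type*} (p : U → U → ℝ) (T : U → U) (α : ℝ) : Prop :=
  ∀ x : U, ∀ q : ℕ, 1 ≤ q →
    p (T x) (T^[q + 1] x) ≤
      max ((Finset.Icc 1 (q + 1)).sup' (Finset.nonempty_Icc.mpr (by omega))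
        (fun i => α * p x (T^[i] x))) (p x x)

/-- `ρ_p = inf {p(x,x) : x ∈ U}`. -/
noncomputable def rho {U : Type*} (p : U → U → ℝ) : ℝ := sInf (Set.range fun x => p x x)

/-- Condition (B) with a given `ε₁`. -/
def CondB {U : Type*} (p : U → U → ℝ) (T : U → U) (ε₁ : ℝ) : Prop :=
  ∀ x y : U, max (p x x) (p y y) ≤ rho p + ε₁ →
    ∀ ε : ℝ, 0 < ε → ∃ q : ℕ, 1 ≤ q ∧ p (T^[q] x) (T^[q] y) ≤ max (p x x) (p y y) + ε

/-- `ρ_p`-completeness. -/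
def RhoComplete {U : Type*} (p : U → U → ℝ) : Prop :=
  ∀ x : ℕ → U,
    Tendsto (fun qq : ℕ × ℕ => p (x qq.1) (x qq.2)) atTop (nhds (rho p)) →
    ∃ a : U, Tendsto (fun q => p (x q) a) atTop (nhds (p a a)) ∧ p a a = rho p

theorem lemma2a_limit_exists {U : Type*} (p : U → U → ℝ) (hp : IsPartialMetric p)
    (T : U → U) (α : ℝ) (hα0 : 0 ≤ α) (hα1 : α < 1) (hA : CondA p T α) :
    ∀ x : U, ∃ r : ℝ, Tendsto (fun q : ℕ => p (T^[q] x) (T^[q] x)) atTop (nhds r) := by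
  intro x
  have hα' : (0:ℝ) < 1 - α := by linarith
  -- Step 1: the orbit is bounded (distances from x)
  set C : ℝ := (p x (T x) + p x x) / (1 - α) with hCdef
  have hnum : 0 ≤ p x (T x) + p x x := by
    have := hp.nonneg x (T x); have := hp.nonneg x x; linarith
  have hC0 : 0 ≤ C := div_nonneg hnum (le_of_lt hα')
  have hCkey : p x (T x) + p x x = (1 - α) * C := by
    rw [hCdef, mul_div_assoc']; exact (mul_div_cancel_left₀ _ (ne_of_gt hα')).symm
  have hC : ∀ m, p x (T^[m] x) ≤ C := by
    intro m
    induction m using Nat.strong_induction_on with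
    | _ m ih =>
      match m with
      | 0 =>
        have h0 : p x (T^[0] x) = p x x := by simp
        have := hp.nonneg x (T x)
        nlinarith [mul_nonneg hα0 hC0]
      | 1 =>
        have h0 : p x (T^[1] x) = p x (T x) := by simp
        have := hp.nonneg x x
        nlinarith [mul_nonneg hα0 hC0]
      | (q + 2) =>
        have hq : 1 ≤ q + 1 := by omega
        have hcond := hA x (q + 1) hq
        -- bound the sup'
        have hsup : (Finset.Icc 1 (q + 1 + 1)).sup' (Finset.nonempty_Icc.mpr (by omega))
            (fun i => α * p x (T^[i] x)) ≤ α * max C (p x (T^[q+2] x)) := by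
          apply Finset.sup'_le
          intro i hi
          simp only [Finset.mem_Icc] at hi
          rcases Nat.lt_or_ge i (q + 2) with h | h
          · have := ih i (by omega)
            have : p x (T^[i] x) ≤ max C (p x (T^[q+2] x)) := le_trans this (le_max_left _ _)
            exact mul_le_mul_of_nonneg_left this hα0
          · have : i = q + 2 := by omega
            subst this
            exact mul_le_mul_of_nonneg_left (le_max_right _ _) hα0
        have htri := hp.triangle x (T^[q+2] x) (T x)
        have he : T^[q+2] x = T^[q+1+1] x := by norm_num
        have hTT : 0 ≤ p (T x) (T x) := hp.nonneg _ _
        set c := p x (T^[q+2] x) with hc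
        have hstep : c ≤ p x (T x) + max (α * max C c) (p x x) := by
          have h1 : p (T x) (T^[q+1+1] x) ≤ max (α * max C c) (p x x) :=
            le_trans hcond (max_le_max hsup (le_refl _))
          rw [← he] at h1
          calc c ≤ p x (T x) + p (T x) (T^[q+2] x) - p (T x) (T x) := htri
            _ ≤ p x (T x) + p (T x) (T^[q+2] x) := by linarith
            _ ≤ p x (T x) + max (α * max C c) (p x x) := by linarith
        by_contra hcon
        push_neg at hcon
        have hmax : max C c = c := max_eq_right (le_of_lt hcon)
        rw [hmax] at hstep
        rcases le_total (α * c) (p x x) with h | h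
        · rw [max_eq_right h] at hstep
          nlinarith
        · rw [max_eq_left h] at hstep
          nlinarith [mul_lt_mul_of_pos_left hcon hα', hp.nonneg x x]
  have hB : ∀ m k, p (T^[m] x) (T^[k] x) ≤ 2 * C := by
    intro m k
    have htri := hp.triangle (T^[m] x) (T^[k] x) x
    have h1 : p (T^[m] x) x ≤ C := by rw [hp.symm]; exact hC m
    have h2 := hC k
    have h3 := hp.nonneg x x
    linarith
  -- Definitions
  set a : ℕ → ℝ := fun q => p (T^[q] x) (T^[q] x) with hadef
  set S : ℕ → Set ℝ := fun q => Set.range (fun ij : ℕ × ℕ => p (T^[q+ij.1] x) (T^[q+ij.2] x))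
    with hSdef
  set Δ : ℕ → ℝ := fun q => sSup (S q) with hDdef
  set A : ℕ → ℝ := fun q => sSup (Set.range fun m => a (q+m)) with hAdef
  have ha_nonneg : ∀ q, 0 ≤ a q := fun q => hp.nonneg _ _
  have ha_le : ∀ q, a q ≤ 2 * C := fun q => hB q q
  have hSne : ∀ q, (S q).Nonempty := fun q => ⟨_, ⟨(0,0), rfl⟩⟩
  have hSbdd : ∀ q, BddAbove (S q) := by
    intro q
    refine ⟨2 * C, ?_⟩
    rintro r ⟨⟨i, j⟩, rfl⟩
    exact hB _ _
  have hRne : ∀ q, (Set.range fun m => a (q+m)).Nonempty := fun q => ⟨_, ⟨0, rfl⟩⟩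
  have hRbdd : ∀ q, BddAbove (Set.range fun m => a (q+m)) := by
    intro q
    refine ⟨2 * C, ?_⟩
    rintro r ⟨m, rfl⟩
    exact ha_le _
  have memΔ : ∀ q i j, p (T^[q+i] x) (T^[q+j] x) ≤ Δ q :=
    fun q i j => le_csSup (hSbdd q) ⟨(i, j), rfl⟩
  have memA : ∀ q m, a (q + m) ≤ A q := fun q m => le_csSup (hRbdd q) ⟨m, rfl⟩
  have hΔ0 : ∀ q, 0 ≤ Δ q := by
    intro q
    have := memΔ q 0 0
    have := hp.nonneg (T^[q+0] x) (T^[q+0] x)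
    linarith
  have hA0 : ∀ q, 0 ≤ A q := by
    intro q
    have := memA q 0
    have := ha_nonneg (q + 0)
    linarith
  have hΔanti : Antitone Δ := by
    apply antitone_nat_of_succ_le
    intro q
    apply csSup_le (hSne _)
    rintro r ⟨⟨i, j⟩, rfl⟩
    show p (T^[q+1+i] x) (T^[q+1+j] x) ≤ Δ q
    have : p (T^[q+1+i] x) (T^[q+1+j] x) = p (T^[q+(1+i)] x) (T^[q+(1+j)] x) := by
      congr 2 <;> omega
    rw [this]; exact memΔ q _ _
  have hAanti : Antitone A := by
    apply antitone_nat_of_succ_le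
    intro q
    apply csSup_le (hRne _)
    rintro r ⟨m, rfl⟩
    show a (q+1+m) ≤ A q
    have : a (q+1+m) = a (q+(1+m)) := by congr 1; omega
    rw [this]; exact memA q _
  have hAleΔ : ∀ q, A q ≤ Δ q := by
    intro q
    apply csSup_le (hRne _)
    rintro r ⟨m, rfl⟩
    show a (q+m) ≤ Δ q
    exact memΔ q m m
  -- key inequality K1
  have K1 : ∀ q, Δ (q+1) ≤ max (α * Δ q) (A q) := by
    intro q
    apply csSup_le (hSne _)
    rintro r ⟨⟨i, j⟩, rfl⟩
    show p (T^[q+1+i] x) (T^[q+1+j] x) ≤ max (α * Δ q) (A q)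
    have key : ∀ i j : ℕ, i < j →
        p (T^[q+1+i] x) (T^[q+1+j] x) ≤ max (α * Δ q) (A q) := by
      intro i j hij
      set y := T^[q+i] x with hy
      set m := j - i with hm
      have hm1 : 1 ≤ m := by omega
      have hcond := hA y m hm1
      have e1 : T^[q+1+i] x = T y := by
        rw [hy, show q+1+i = (q+i)+1 by omega, Function.iterate_succ_apply']
      have e2 : T^[q+1+j] x = T^[m+1] y := by
        rw [hy, show q+1+j = (m+1)+(q+i) by omega, Function.iterate_add_apply]
      have hsup : (Finset.Icc 1 (m + 1)).sup' (Finset.nonempty_Icc.mpr (by omega))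
          (fun i => α * p y (T^[i] y)) ≤ α * Δ q := by
        apply Finset.sup'_le
        intro k hk
        have : p y (T^[k] y) ≤ Δ q := by
          have e3 : T^[k] y = T^[q+(i+k)] x := by
            rw [hy, ← Function.iterate_add_apply]
            congr 1; omega
          have e4 : y = T^[q+i] x := hy
          rw [e3, e4]
          exact memΔ q i (i+k)
        exact mul_le_mul_of_nonneg_left this hα0
      have hyy : p y y ≤ A q := memA q i
      rw [e1, e2]
      exact le_trans hcond (max_le_max hsup hyy)
    rcases lt_trichotomy i j with h | h | h
    · exact key i j h
    · subst h
      have : p (T^[q+1+i] x) (T^[q+1+i] x) = a (q+(1+i)) := by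
        rw [hadef]; congr 2 <;> omega
      rw [this]
      exact le_trans (memA q _) (le_max_right _ _)
    · rw [hp.symm]; exact key j i h
  -- key inequality K3
  have K3 : ∀ k, a (k+1) ≤ max (α * Δ k) (a k) := by
    intro k
    set y := T^[k] x with hy
    have hcond := hA y 1 (le_refl 1)
    have e1 : a (k+1) = p (T y) (T y) := by
      simp only [hadef, hy, Function.iterate_succ_apply']
    have e2 : p (T y) (T y) ≤ p (T y) (T^[1+1] y) := by
      exact hp.self_le _ _
    have hsup : (Finset.Icc 1 (1 + 1)).sup' (Finset.nonempty_Icc.mpr (by omega))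
        (fun i => α * p y (T^[i] y)) ≤ α * Δ k := by
      apply Finset.sup'_le
      intro i hi
      have : p y (T^[i] y) ≤ Δ k := by
        have e3 : T^[i] y = T^[k+i] x := by
          rw [hy, ← Function.iterate_add_apply]; congr 1; omega
        have e4 : y = T^[k+0] x := by rw [hy]; congr 1
        rw [e3, e4]
        exact memΔ k 0 i
      exact mul_le_mul_of_nonneg_left this hα0
    have hyy : p y y = a k := rfl
    rw [e1]
    exact le_trans e2 (le_trans hcond (max_le_max hsup (le_of_eq hyy)))
  -- limits of Δ and A
  have hΔbb : BddBelow (Set.range Δ) := ⟨0, by rintro r ⟨q, rfl⟩; exact hΔ0 q⟩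
  have hAbb : BddBelow (Set.range A) := ⟨0, by rintro r ⟨q, rfl⟩; exact hA0 q⟩
  set DL : ℝ := ⨅ q, Δ q with hDLdef
  set L : ℝ := ⨅ q, A q with hLdef
  have hΔten : Tendsto Δ atTop (nhds DL) := tendsto_atTop_ciInf hΔanti hΔbb
  have hAten : Tendsto A atTop (nhds L) := tendsto_atTop_ciInf hAanti hAbb
  have hL0 : 0 ≤ L := le_ciInf hA0
  have hDL0 : 0 ≤ DL := le_ciInf hΔ0
  have hLleA : ∀ q, L ≤ A q := fun q => ciInf_le hAbb q
  have hDLleΔ : ∀ q, DL ≤ Δ q := fun q => ciInf_le hΔbb q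
  have hLDL : L ≤ DL := le_ciInf (fun q => le_trans (le_trans (ciInf_le hAbb q) (hAleΔ q))
    (le_refl _))
  -- DL ≤ max (α DL) L
  have hDLmax : DL ≤ max (α * DL) L := by
    have h1 : Tendsto (fun q => Δ (q+1)) atTop (nhds DL) :=
      hΔten.comp (tendsto_add_atTop_nat 1)
    have h2 : Tendsto (fun q => max (α * Δ q) (A q)) atTop (nhds (max (α * DL) L)) :=
      (hΔten.const_mul α).max hAten
    exact le_of_tendsto_of_tendsto' h1 h2 K1
  have hDLL : DL = L := by
    rcases le_or_gt DL L with h | h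
    · exact le_antisymm h hLDL
    · have h1 : DL ≤ α * DL := (le_max_iff.mp hDLmax).resolve_right (not_le.mpr h)
      nlinarith
  -- final convergence
  refine ⟨L, ?_⟩
  rw [Metric.tendsto_atTop]
  intro ε hε
  obtain ⟨N1, hN1⟩ := Metric.tendsto_atTop.mp hAten ε hε
  -- lower bound claim
  have lower : ∃ N2, ∀ n ≥ N2, L - ε < a n := by
    rcases eq_or_lt_of_le hL0 with h | hLpos
    · exact ⟨0, fun n _ => by have := ha_nonneg n; linarith⟩
    · set ε' : ℝ := min ε ((1 - α) * L / 2) with hε'def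
      have hε' : 0 < ε' := lt_min hε (by positivity)
      have hε'le : ε' ≤ ε := min_le_left _ _
      have hε'le2 : ε' ≤ (1 - α) * L / 2 := min_le_right _ _
      have hαL : α * DL < L - ε' := by rw [hDLL]; nlinarith
      have hev : ∀ᶠ q in atTop, α * Δ q < L - ε' :=
        (tendsto_order.mp (hΔten.const_mul α)).2 (L - ε') (by rw [mul_comm] at hαL ⊢; exact hαL)
      obtain ⟨q0, hq0⟩ := eventually_atTop.mp hev
      refine ⟨q0, fun n hn => ?_⟩
      by_contra hcon
      push_neg at hcon
      have hcon' : a n ≤ L - ε' := by linarith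
      have step : ∀ m, a (n + m) ≤ L - ε' := by
        intro m
        induction m with
        | zero => simpa only [Nat.add_zero] using hcon'
        | succ m ihm =>
          have h1 := K3 (n + m)
          have h2 : α * Δ (n + m) < L - ε' := hq0 (n + m) (by omega)
          have : a (n + m + 1) ≤ max (α * Δ (n+m)) (a (n+m)) := h1
          have hx : max (α * Δ (n+m)) (a (n+m)) ≤ L - ε' :=
            max_le (le_of_lt h2) ihm
          calc a (n + (m+1)) = a (n + m + 1) := by ring_nf
            _ ≤ L - ε' := le_trans this hx
      have hAn : A n ≤ L - ε' := csSup_le (hRne _) (by rintro r ⟨m, rfl⟩; exact step m)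
      have := hLleA n
      linarith
  obtain ⟨N2, hN2⟩ := lower
  refine ⟨max N1 N2, fun n hn => ?_⟩
  have hn1 : n ≥ N1 := le_trans (le_max_left _ _) hn
  have hn2 : n ≥ N2 := le_trans (le_max_right _ _) hn
  have hup : a n ≤ A n := by
    have := memA n 0
    simpa using this
  have hAn := hN1 n hn1
  rw [Real.dist_eq, abs_sub_lt_iff] at hAn ⊢
  constructor
  · linarith [hAn.1]
  · linarith [hN2 n hn2]
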